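/- Region-growing lemma with edge and node lengths (edge-deletion node-multicut version): in the mixed edge/node region-growing setup, for all real numbers 0 ≤ a < b one has ∫_a^b c(∂x(ρ)) / ( Vol(ρ) · ln( e·Vol(b)/Vol(ρ) ) ) dρ ≤ ln ln( e·Vol(b)/Vol(a) ) and ∫_a^b c(∂x(ρ)) / ( cVol(ρ) · ln( e·cVol(a)/cVol(ρ) ) ) dρ ≤ ln ln( e·cVol(a)/cVol(b) ). Equivalently, if ρ is uniform on [a,b), the expectations of the two integrands are at most (1/(b−a)) times the respective right-hand sides. -/

import Mathlib

open scoped Classical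

namespace MixedRegionGrow

variable {V : Type*}

/-- The smaller of the two values of `g` at the endpoints of an edge. -/
noncomputable def dmin (g : V → ℝ) : Sym2 V → ℝ :=
  Sym2.lift ⟨fun a b => min (g a) (g b), fun a b => min_comm _ _⟩

/-- The larger of the two values of `g` at the endpoints of an edge. -/
noncomputable def dmax (g : V → ℝ) : Sym2 V → ℝ :=
  Sym2.lift ⟨fun a b => max (g a) (g b), fun a b => max_comm _ _⟩

/-- The ball `B(ρ)` (w.r.t. the distance function `g = ℓ(z;·)`). -/
noncomputable def ball (g : V → ℝ) (S : Finset V) (ρ : ℝ) : Finset V :=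
  S.filter fun v => g v ≤ ρ

/-- The node-boundary `Γy(ρ) = {v ∈ S : ρ < ℓ(z;v) ≤ ρ + y_v}`. -/
noncomputable def gy (g : V → ℝ) (yv : V → ℝ) (S : Finset V) (ρ : ℝ) : Finset V :=
  S.filter fun v => ρ < g v ∧ g v ≤ ρ + yv v

/-- The edge-boundary
`∂x(ρ) = {(u,v) ∈ E : u, v ∈ S, ℓ(z;u) ≤ ρ, ℓ(z;v) - y_v > ρ}`. -/
noncomputable def bdx [Fintype V] [DecidableEq V] (G : SimpleGraph V) [DecidableRel G.Adj]
    (g : V → ℝ) (yv : V → ℝ) (S : Finset V) (ρ : ℝ) : Finset (Sym2 V) :=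
  G.edgeFinset.filter fun e =>
    ∃ u w, e = s(u, w) ∧ u ∈ S ∧ w ∈ S ∧ g u ≤ ρ ∧ ρ < g w - yv w

/-- `B̄(ρ) = S \ (B(ρ) ∪ Γy(ρ))`. -/
noncomputable def bbar (g : V → ℝ) (yv : V → ℝ) (S : Finset V) (ρ : ℝ) : Finset V :=
  S \ (ball g S ρ ∪ gy g yv S ρ)

/-- The volume `Vol(ρ)`; for an `∂x(ρ)`-edge the endpoint `u ∈ B(ρ)` is the one closer
to `z`, so its distance to `z` is `min` of the two endpoint distances. -/
noncomputable def vol [Fintype V] [DecidableEq V] (G : SimpleGraph V) [DecidableRel G.Adj]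
    (c x : Sym2 V → ℝ) (g : V → ℝ) (yv : V → ℝ) (S : Finset V) (β ρ : ℝ) : ℝ :=
  β + ∑ e ∈ G.edgeFinset.filter (fun e =>
        (∃ w ∈ e, w ∈ ball g S ρ) ∧ ∀ w ∈ e, w ∈ ball g S ρ ∪ gy g yv S ρ),
        c e * x e
    + ∑ e ∈ bdx G g yv S ρ, c e * (ρ - dmin g e)

/-- The complementary volume `cVol(ρ)`; for an `∂x(ρ)`-edge the far endpoint `v`
maximizes `ℓ(z;·) - y`, so the term `ℓ(z;v) - ρ - y_v` equals
`max (g - y) over the endpoints, minus ρ`. -/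
noncomputable def cvol [Fintype V] [DecidableEq V] (G : SimpleGraph V) [DecidableRel G.Adj]
    (c x : Sym2 V → ℝ) (g : V → ℝ) (yv : V → ℝ) (S : Finset V) (β ρ : ℝ) : ℝ :=
  β + ∑ e ∈ G.edgeFinset.filter (fun e =>
        (∃ w ∈ e, w ∈ bbar g yv S ρ) ∧ ∀ w ∈ e, w ∈ bbar g yv S ρ ∪ gy g yv S ρ),
        c e * x e
    + ∑ e ∈ bdx G g yv S ρ, c e * (dmax (fun w => g w - yv w) e - ρ)



open MeasureTheory intervalIntegral Set


noncomputable def Phi (K u : ℝ) : ℝ := - Real.log (Real.log (Real.exp 1 * K / u))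

lemma one_le_log_eK_div {K β u : ℝ} (hβ : 0 < β) (hu : β ≤ u) (huK : u ≤ K) :
    1 ≤ Real.log (Real.exp 1 * K / u) := by
  have hu0 : 0 < u := hβ.trans_le hu
  have h : Real.exp 1 ≤ Real.exp 1 * K / u := by
    rw [le_div_iff₀ hu0]
    have := Real.exp_pos 1
    nlinarith
  calc (1:ℝ) = Real.log (Real.exp 1) := (Real.log_exp 1).symm
    _ ≤ _ := Real.log_le_log (Real.exp_pos 1) h

lemma phi_mono {K β u v : ℝ} (hβ : 0 < β) (hu : β ≤ u) (huv : u ≤ v) (hv : v ≤ K) :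
    Phi K u ≤ Phi K v := by
  have hu0 : 0 < u := hβ.trans_le hu
  have hv0 : 0 < v := hu0.trans_le huv
  have h1 : 1 ≤ Real.log (Real.exp 1 * K / v) := one_le_log_eK_div hβ (hu.trans huv) hv
  have hK0 : 0 < K := hv0.trans_le hv
  have h2 : Real.log (Real.exp 1 * K / v) ≤ Real.log (Real.exp 1 * K / u) :=
    Real.log_le_log (div_pos (mul_pos (Real.exp_pos 1) hK0) hv0)
      (div_le_div_of_nonneg_left (mul_pos (Real.exp_pos 1) hK0).le hu0 huv)
  have h3 : Real.log (Real.log (Real.exp 1 * K / v)) ≤ Real.log (Real.log (Real.exp 1 * K / u)) :=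
    Real.log_le_log (by linarith) (by linarith)
  simpa [Phi] using neg_le_neg h3



lemma core (β K : ℝ) (hβ : 0 < β) (f F : ℝ → ℝ) (T : Finset ℝ) :
    ∀ (a b : ℝ), a < b →
    (∀ ρ, a ≤ ρ → ρ ≤ b → β ≤ F ρ ∧ F ρ ≤ K) →
    (∀ r1 r2, a ≤ r1 → r1 ≤ r2 → r2 ≤ b → F r1 ≤ F r2) →
    (∀ s t, a ≤ s → s < t → t ≤ b → (∀ r, s < r → r < t → r ∉ T) →
      ∃ A B, 0 ≤ B ∧ ∀ r, s < r → r < t → F r = A + B * r ∧ f r = B) →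
    IntervalIntegrable (fun ρ => f ρ / (F ρ * Real.log (Real.exp 1 * K / F ρ))) volume a b ∧
    (∫ ρ in a..b, f ρ / (F ρ * Real.log (Real.exp 1 * K / F ρ))) ≤ Phi K (F b) - Phi K (F a) := by
  induction T using Finset.strongInduction with
  | _ T ih =>
  intro a b hab hbound hmono hpieces
  by_cases hsplit : ∃ t ∈ T, a < t ∧ t < b
  · obtain ⟨t, htT, hat, htb⟩ := hsplit
    have hsub : T.erase t ⊂ T := Finset.erase_ssubset htT
    have key : ∀ s u : ℝ, a ≤ s → u ≤ b → s < u →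
        (∀ r, s < r → r < u → r ≠ t) →
        IntervalIntegrable (fun ρ => f ρ / (F ρ * Real.log (Real.exp 1 * K / F ρ))) volume s u ∧
        (∫ ρ in s..u, f ρ / (F ρ * Real.log (Real.exp 1 * K / F ρ))) ≤ Phi K (F u) - Phi K (F s) := by
      intro s u has hub hsu hnot
      refine ih _ hsub s u hsu (fun ρ h1 h2 => hbound ρ (has.trans h1) (h2.trans hub))
        (fun r1 r2 h1 h2 h3 => hmono r1 r2 (has.trans h1) h2 (h3.trans hub)) ?_
      intro s' t' hs' hst' ht' havoid
      refine hpieces s' t' (has.trans hs') hst' (ht'.trans hub) ?_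
      intro r hr1 hr2 hrT
      exact havoid r hr1 hr2 (Finset.mem_erase.mpr ⟨hnot r (hs'.trans_lt hr1) (hr2.trans_le ht'), hrT⟩)
    have h1 := key a t le_rfl htb.le hat (fun r h1 h2 => ne_of_lt h2)
    have h2 := key t b hat.le le_rfl htb (fun r h1 h2 => (ne_of_gt h1))
    refine ⟨h1.1.trans h2.1, ?_⟩
    rw [← integral_add_adjacent_intervals h1.1 h2.1]
    linarith [h1.2, h2.2]
  · -- base case: no breakpoint in (a, b)
    push_neg at hsplit
    obtain ⟨A, B, hB, hform⟩ := hpieces a b le_rfl hab le_rfl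
      (fun r h1 h2 hrT => absurd (hsplit r hrT h1) (not_le.mpr h2))
    set u : ℝ → ℝ := fun r => A + B * r with hu_def
    have humono : ∀ r1 r2 : ℝ, r1 ≤ r2 → u r1 ≤ u r2 := by
      intro r1 r2 h; simp only [hu_def]; nlinarith
    have hucont : Continuous u := by
      simp only [hu_def]
      exact continuous_const.add (continuous_const.mul continuous_id)
    -- endpoint bounds via one-sided limits
    have htendA : Filter.Tendsto u (nhdsWithin a (Ioi a)) (nhds (u a)) :=
      (hucont.tendsto a).mono_left nhdsWithin_le_nhds
    have htendB : Filter.Tendsto u (nhdsWithin b (Iio b)) (nhds (u b)) :=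
      (hucont.tendsto b).mono_left nhdsWithin_le_nhds
    have hIooA : Ioo a b ∈ nhdsWithin a (Ioi a) := Ioo_mem_nhdsGT hab
    have hIooB : Ioo a b ∈ nhdsWithin b (Iio b) := Ioo_mem_nhdsLT hab
    have huval : ∀ r, a < r → r < b → u r = F r := fun r h1 h2 => ((hform r h1 h2).1).symm
    have hua_ge : β ≤ u a := by
      refine ge_of_tendsto htendA (Filter.eventually_of_mem hIooA ?_)
      intro r hr
      rw [huval r hr.1 hr.2]
      exact (hbound r hr.1.le hr.2.le).1
    have hua_geF : F a ≤ u a := by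
      refine ge_of_tendsto htendA (Filter.eventually_of_mem hIooA ?_)
      intro r hr
      rw [huval r hr.1 hr.2]
      exact hmono a r le_rfl hr.1.le hr.2.le
    have hub_le : u b ≤ K := by
      refine le_of_tendsto htendB (Filter.eventually_of_mem hIooB ?_)
      intro r hr
      rw [huval r hr.1 hr.2]
      exact (hbound r hr.1.le hr.2.le).2
    have hub_leF : u b ≤ F b := by
      refine le_of_tendsto htendB (Filter.eventually_of_mem hIooB ?_)
      intro r hr
      rw [huval r hr.1 hr.2]
      exact hmono r b hr.1.le hr.2.le le_rfl
    have hur_mem : ∀ r, a ≤ r → r ≤ b → β ≤ u r ∧ u r ≤ K := by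
      intro r h1 h2
      exact ⟨hua_ge.trans (humono a r h1), (humono r b h2).trans hub_le⟩
    -- the nice function and its antiderivative
    have hderiv : ∀ r ∈ uIcc a b,
        HasDerivAt (fun ρ => Phi K (u ρ)) (B / (u r * Real.log (Real.exp 1 * K / u r))) r := by
      intro r hr
      rw [uIcc_of_le hab.le] at hr
      have hmem := hur_mem r hr.1 hr.2
      have hu0 : 0 < u r := hβ.trans_le hmem.1
      have hK0 : 0 < K := hβ.trans_le ((hbound b hab.le le_rfl).1.trans (hbound b hab.le le_rfl).2)
      have heK0 : 0 < Real.exp 1 * K := mul_pos (Real.exp_pos 1) hK0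
      have hL1 : 1 ≤ Real.log (Real.exp 1 * K / u r) := one_le_log_eK_div hβ hmem.1 hmem.2
      have hu' : HasDerivAt u B r := by
        have h := ((hasDerivAt_id r).const_mul B).const_add A
        rw [mul_one] at h
        exact h
      have hdiv : HasDerivAt (fun ρ => Real.exp 1 * K / u ρ)
          ((0 * u r - Real.exp 1 * K * B) / (u r) ^ 2) r :=
        (hasDerivAt_const r (Real.exp 1 * K)).div hu' hu0.ne'
      have hlog1 : HasDerivAt (fun ρ => Real.log (Real.exp 1 * K / u ρ))
          (((0 * u r - Real.exp 1 * K * B) / (u r) ^ 2) / (Real.exp 1 * K / u r)) r :=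
        hdiv.log (by positivity)
      have hlog2 : HasDerivAt (fun ρ => Real.log (Real.log (Real.exp 1 * K / u ρ)))
          ((((0 * u r - Real.exp 1 * K * B) / (u r) ^ 2) / (Real.exp 1 * K / u r)) /
            Real.log (Real.exp 1 * K / u r)) r :=
        hlog1.log (by linarith)
      have := hlog2.neg
      refine this.congr_deriv ?_
      have hL0 : Real.log (Real.exp 1 * K / u r) ≠ 0 := by linarith
      have hu0' : u r ≠ 0 := hu0.ne'
      have heK0' : Real.exp 1 * K ≠ 0 := heK0.ne'
      field_simp
      ring
    have hcont : ContinuousOn (fun r => B / (u r * Real.log (Real.exp 1 * K / u r))) (uIcc a b) := by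
      rw [uIcc_of_le hab.le]
      have hK0 : 0 < K := hβ.trans_le ((hbound b hab.le le_rfl).1.trans (hbound b hab.le le_rfl).2)
      apply ContinuousOn.div continuousOn_const
      · apply ContinuousOn.mul hucont.continuousOn
        apply ContinuousOn.log
        · exact (continuousOn_const.div hucont.continuousOn
            (fun r hr => (hβ.trans_le (hur_mem r hr.1 hr.2).1).ne'))
        · intro r hr
          have h1 := one_le_log_eK_div hβ (hur_mem r hr.1 hr.2).1 (hur_mem r hr.1 hr.2).2
          intro h0
          rw [h0, Real.log_zero] at h1
          linarith
      · intro r hr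
        have hu0 : 0 < u r := hβ.trans_le (hur_mem r hr.1 hr.2).1
        have := one_le_log_eK_div hβ (hur_mem r hr.1 hr.2).1 (hur_mem r hr.1 hr.2).2
        exact (mul_pos hu0 (by linarith)).ne'
    have hnice_int : IntervalIntegrable (fun r => B / (u r * Real.log (Real.exp 1 * K / u r)))
        volume a b := hcont.intervalIntegrable
    have hftc : (∫ r in a..b, B / (u r * Real.log (Real.exp 1 * K / u r)))
        = Phi K (u b) - Phi K (u a) :=
      integral_eq_sub_of_hasDerivAt hderiv hnice_int
    -- a.e. equality of the two integrands on (a, b]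
    have hae : ∀ᵐ r ∂(volume : Measure ℝ), r ≠ b := by
      rw [MeasureTheory.ae_iff]
      simpa using Real.volume_singleton
    have haeIoc : ∀ᵐ r ∂(volume : Measure ℝ), r ∈ Set.uIoc a b →
        f r / (F r * Real.log (Real.exp 1 * K / F r))
          = B / (u r * Real.log (Real.exp 1 * K / u r)) := by
      filter_upwards [hae] with r hr hmem
      rw [uIoc_of_le hab.le] at hmem
      have hrIoo : r ∈ Ioo a b := ⟨hmem.1, lt_of_le_of_ne hmem.2 hr⟩
      rw [(hform r hrIoo.1 hrIoo.2).1, (hform r hrIoo.1 hrIoo.2).2]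
    have hint : IntervalIntegrable (fun ρ => f ρ / (F ρ * Real.log (Real.exp 1 * K / F ρ)))
        volume a b := by
      rw [intervalIntegrable_iff] at hnice_int ⊢
      refine hnice_int.congr ?_
      have : ∀ᵐ r ∂(volume.restrict (Set.uIoc a b)),
          (fun r => B / (u r * Real.log (Real.exp 1 * K / u r))) r
            = f r / (F r * Real.log (Real.exp 1 * K / F r)) := by
        rw [MeasureTheory.ae_restrict_iff' measurableSet_uIoc]
        filter_upwards [haeIoc] with r h hmem
        exact (h hmem).symm
      exact this
    refine ⟨hint, ?_⟩
    rw [integral_congr_ae haeIoc, hftc]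
    have hFa := hbound a le_rfl hab.le
    have hFb := hbound b hab.le le_rfl
    have l1 : Phi K (u b) ≤ Phi K (F b) := phi_mono hβ (hua_ge.trans (humono a b hab.le)) hub_leF hFb.2
    have l2 : Phi K (F a) ≤ Phi K (u a) :=
      phi_mono hβ hFa.1 hua_geF ((humono a b hab.le).trans hub_le)
    linarith


section Comb

variable [Fintype V] [DecidableEq V] {G : SimpleGraph V} [DecidableRel G.Adj]

omit [Fintype V] [DecidableEq V] in
lemma mem_ball' {g : V → ℝ} {S : Finset V} {ρ : ℝ} {v : V} :
    v ∈ ball g S ρ ↔ v ∈ S ∧ g v ≤ ρ := by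
  simp [ball]

omit [Fintype V] [DecidableEq V] in
lemma mem_gy' {g yv : V → ℝ} {S : Finset V} {ρ : ℝ} {v : V} :
    v ∈ gy g yv S ρ ↔ v ∈ S ∧ ρ < g v ∧ g v ≤ ρ + yv v := by
  simp [gy]

omit [Fintype V] [DecidableEq V] in
lemma ballgy {g yv : V → ℝ} {S : Finset V} {ρ : ℝ} {v : V} (hy : 0 ≤ yv v) :
    (v ∈ ball g S ρ ∨ v ∈ gy g yv S ρ) ↔ v ∈ S ∧ g v ≤ ρ + yv v := by
  rw [mem_ball', mem_gy']
  constructor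
  · rintro (⟨h1, h2⟩ | ⟨h1, h2, h3⟩) <;> exact ⟨h1, by linarith⟩
  · rintro ⟨h1, h2⟩
    by_cases h : g v ≤ ρ
    · exact Or.inl ⟨h1, h⟩
    · exact Or.inr ⟨h1, not_le.mp h, h2⟩

omit [Fintype V] [DecidableEq V] in
lemma mem_bbar' {g yv : V → ℝ} {S : Finset V} {ρ : ℝ} {v : V} (hy : 0 ≤ yv v) :
    v ∈ bbar g yv S ρ ↔ v ∈ S ∧ ρ + yv v < g v := by
  rw [bbar, Finset.mem_sdiff, Finset.mem_union]
  constructor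
  · rintro ⟨h1, h2⟩
    refine ⟨h1, ?_⟩
    by_contra hcon
    push_neg at hcon
    exact h2 ((ballgy hy).mpr ⟨h1, hcon⟩)
  · rintro ⟨h1, h2⟩
    refine ⟨h1, fun hcon => ?_⟩
    have := ((ballgy hy).mp hcon).2
    linarith

omit [Fintype V] [DecidableEq V] in
lemma bbargy {g yv : V → ℝ} {S : Finset V} {ρ : ℝ} {v : V} (hy : 0 ≤ yv v) :
    (v ∈ bbar g yv S ρ ∨ v ∈ gy g yv S ρ) ↔ v ∈ S ∧ ρ < g v := by
  rw [mem_bbar' hy, mem_gy']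
  constructor
  · rintro (⟨h1, h2⟩ | ⟨h1, h2, h3⟩) <;> exact ⟨h1, by linarith⟩
  · rintro ⟨h1, h2⟩
    by_cases h : g v ≤ ρ + yv v
    · exact Or.inr ⟨h1, h2, h⟩
    · exact Or.inl ⟨h1, not_le.mp h⟩

omit [Fintype V] [DecidableEq V] in
lemma dmin_mk (g : V → ℝ) (u w : V) : dmin g s(u, w) = min (g u) (g w) := by
  simp [dmin]

omit [Fintype V] [DecidableEq V] in
lemma dmax_mk (g : V → ℝ) (u w : V) : dmax g s(u, w) = max (g u) (g w) := by
  simp [dmax]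

lemma vol_PQ_disj {g yv : V → ℝ} {S : Finset V} (hyv : ∀ w, 0 ≤ yv w) {e : Sym2 V} {ρ : ℝ}
    (hQ : ∃ u w, e = s(u, w) ∧ u ∈ S ∧ w ∈ S ∧ g u ≤ ρ ∧ ρ < g w - yv w) :
    ¬ ((∃ w ∈ e, w ∈ ball g S ρ) ∧ ∀ w ∈ e, w ∈ ball g S ρ ∪ gy g yv S ρ) := by
  obtain ⟨u, w, rfl, huS, hwS, hgu, hgw⟩ := hQ
  rintro ⟨-, hall⟩
  have h := hall w (Sym2.mem_mk_right u w)
  rw [Finset.mem_union] at h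
  have := ((ballgy (hyv w)).mp h).2
  linarith

lemma cvol_PQ_disj {g yv : V → ℝ} {S : Finset V} (hyv : ∀ w, 0 ≤ yv w) {e : Sym2 V} {ρ : ℝ}
    (hQ : ∃ u w, e = s(u, w) ∧ u ∈ S ∧ w ∈ S ∧ g u ≤ ρ ∧ ρ < g w - yv w) :
    ¬ ((∃ v ∈ e, v ∈ bbar g yv S ρ) ∧ ∀ v ∈ e, v ∈ bbar g yv S ρ ∪ gy g yv S ρ) := by
  obtain ⟨u, w, rfl, huS, hwS, hgu, hgw⟩ := hQ
  rintro ⟨-, hall⟩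
  have h := hall u (Sym2.mem_mk_left u w)
  rw [Finset.mem_union] at h
  have := ((bbargy (hyv u)).mp h).2
  linarith

lemma vol_eq_sum (c x : Sym2 V → ℝ) (g yv : V → ℝ) (S : Finset V) (β ρ : ℝ) :
    vol G c x g yv S β ρ = β + ∑ e ∈ G.edgeFinset,
      ((if (∃ w ∈ e, w ∈ ball g S ρ) ∧ (∀ w ∈ e, w ∈ ball g S ρ ∪ gy g yv S ρ)
          then c e * x e else 0)
        + (if ∃ u w, e = s(u, w) ∧ u ∈ S ∧ w ∈ S ∧ g u ≤ ρ ∧ ρ < g w - yv w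
          then c e * (ρ - dmin g e) else 0)) := by
  rw [vol, bdx, Finset.sum_filter, Finset.sum_filter, Finset.sum_add_distrib]
  ring

lemma cvol_eq_sum (c x : Sym2 V → ℝ) (g yv : V → ℝ) (S : Finset V) (β ρ : ℝ) :
    cvol G c x g yv S β ρ = β + ∑ e ∈ G.edgeFinset,
      ((if (∃ w ∈ e, w ∈ bbar g yv S ρ) ∧ (∀ w ∈ e, w ∈ bbar g yv S ρ ∪ gy g yv S ρ)
          then c e * x e else 0)
        + (if ∃ u w, e = s(u, w) ∧ u ∈ S ∧ w ∈ S ∧ g u ≤ ρ ∧ ρ < g w - yv w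
          then c e * (dmax (fun v => g v - yv v) e - ρ) else 0)) := by
  rw [cvol, bdx, Finset.sum_filter, Finset.sum_filter, Finset.sum_add_distrib]
  ring


lemma vol_contrib_nonneg (c x : Sym2 V → ℝ) (g yv : V → ℝ) (S : Finset V)
    (hc : ∀ e, 0 ≤ c e) (hx : ∀ e, 0 ≤ x e) {ρ : ℝ} (e : Sym2 V) :
    0 ≤ (if (∃ w ∈ e, w ∈ ball g S ρ) ∧ (∀ w ∈ e, w ∈ ball g S ρ ∪ gy g yv S ρ)
          then c e * x e else 0)
        + (if ∃ u w, e = s(u, w) ∧ u ∈ S ∧ w ∈ S ∧ g u ≤ ρ ∧ ρ < g w - yv w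
          then c e * (ρ - dmin g e) else 0) := by
  refine add_nonneg ?_ ?_
  · split_ifs with h
    · exact mul_nonneg (hc e) (hx e)
    · exact le_refl 0
  · split_ifs with h
    · obtain ⟨u, w, rfl, huS, hwS, hgu, hgw⟩ := h
      refine mul_nonneg (hc _) ?_
      rw [dmin_mk]
      have := min_le_left (g u) (g w)
      linarith
    · exact le_refl 0

lemma cvol_contrib_nonneg (c x : Sym2 V → ℝ) (g yv : V → ℝ) (S : Finset V)
    (hc : ∀ e, 0 ≤ c e) (hx : ∀ e, 0 ≤ x e) {ρ : ℝ} (e : Sym2 V) :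
    0 ≤ (if (∃ w ∈ e, w ∈ bbar g yv S ρ) ∧ (∀ w ∈ e, w ∈ bbar g yv S ρ ∪ gy g yv S ρ)
          then c e * x e else 0)
        + (if ∃ u w, e = s(u, w) ∧ u ∈ S ∧ w ∈ S ∧ g u ≤ ρ ∧ ρ < g w - yv w
          then c e * (dmax (fun v => g v - yv v) e - ρ) else 0) := by
  refine add_nonneg ?_ ?_
  · split_ifs with h
    · exact mul_nonneg (hc e) (hx e)
    · exact le_refl 0
  · split_ifs with h
    · obtain ⟨u, w, rfl, huS, hwS, hgu, hgw⟩ := h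
      refine mul_nonneg (hc _) ?_
      rw [dmax_mk]
      have := le_max_right (g u - yv u) (g w - yv w)
      linarith
    · exact le_refl 0

lemma beta_le_vol (c x : Sym2 V → ℝ) (g yv : V → ℝ) (S : Finset V)
    (hc : ∀ e, 0 ≤ c e) (hx : ∀ e, 0 ≤ x e) (β ρ : ℝ) :
    β ≤ vol G c x g yv S β ρ := by
  rw [vol_eq_sum]
  exact le_add_of_nonneg_right
    (Finset.sum_nonneg fun e _ => vol_contrib_nonneg c x g yv S hc hx e)

lemma beta_le_cvol (c x : Sym2 V → ℝ) (g yv : V → ℝ) (S : Finset V)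
    (hc : ∀ e, 0 ≤ c e) (hx : ∀ e, 0 ≤ x e) (β ρ : ℝ) :
    β ≤ cvol G c x g yv S β ρ := by
  rw [cvol_eq_sum]
  exact le_add_of_nonneg_right
    (Finset.sum_nonneg fun e _ => cvol_contrib_nonneg c x g yv S hc hx e)


lemma vol_P_mono {g yv : V → ℝ} {S : Finset V} (hyv : ∀ w, 0 ≤ yv w) {e : Sym2 V}
    {r1 r2 : ℝ} (h12 : r1 ≤ r2)
    (hP : (∃ v ∈ e, v ∈ ball g S r1) ∧ ∀ v ∈ e, v ∈ ball g S r1 ∪ gy g yv S r1) :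
    (∃ v ∈ e, v ∈ ball g S r2) ∧ ∀ v ∈ e, v ∈ ball g S r2 ∪ gy g yv S r2 := by
  obtain ⟨⟨v, hv, hvb⟩, hall⟩ := hP
  refine ⟨⟨v, hv, ?_⟩, fun w hw => ?_⟩
  · rw [mem_ball'] at hvb ⊢
    exact ⟨hvb.1, hvb.2.trans h12⟩
  · have h := hall w hw
    rw [Finset.mem_union] at h ⊢
    have h2 := (ballgy (hyv w)).mp h
    exact (ballgy (hyv w)).mpr ⟨h2.1, by linarith [h2.2]⟩

lemma cvol_P_anti {g yv : V → ℝ} {S : Finset V} (hyv : ∀ w, 0 ≤ yv w) {e : Sym2 V}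
    {r1 r2 : ℝ} (h12 : r1 ≤ r2)
    (hP : (∃ v ∈ e, v ∈ bbar g yv S r2) ∧ ∀ v ∈ e, v ∈ bbar g yv S r2 ∪ gy g yv S r2) :
    (∃ v ∈ e, v ∈ bbar g yv S r1) ∧ ∀ v ∈ e, v ∈ bbar g yv S r1 ∪ gy g yv S r1 := by
  obtain ⟨⟨v, hv, hvb⟩, hall⟩ := hP
  refine ⟨⟨v, hv, ?_⟩, fun w hw => ?_⟩
  · rw [mem_bbar' (hyv v)] at hvb ⊢
    exact ⟨hvb.1, by linarith [hvb.2]⟩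
  · have h := hall w hw
    rw [Finset.mem_union] at h ⊢
    have h2 := (bbargy (hyv w)).mp h
    exact (bbargy (hyv w)).mpr ⟨h2.1, by linarith [h2.2]⟩

lemma vol_mono (c x : Sym2 V → ℝ) (g yv : V → ℝ) (S : Finset V)
    (hc : ∀ e, 0 ≤ c e) (hx : ∀ e, 0 ≤ x e) (hyv : ∀ w, 0 ≤ yv w) (β : ℝ) {b r1 r2 : ℝ}
    (htri : ∀ u w, G.Adj u w → g u ≤ b → g w ≤ g u + x s(u, w) + yv w)
    (h12 : r1 ≤ r2) (h2b : r2 ≤ b) :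
    vol G c x g yv S β r1 ≤ vol G c x g yv S β r2 := by
  rw [vol_eq_sum, vol_eq_sum]
  refine (add_le_add_iff_left β).mpr (Finset.sum_le_sum ?_)
  intro e he
  by_cases hQ1 : ∃ u w, e = s(u, w) ∧ u ∈ S ∧ w ∈ S ∧ g u ≤ r1 ∧ r1 < g w - yv w
  · obtain ⟨u, w, rfl, huS, hwS, hgu, hgw⟩ := hQ1
    have hQ1' : ∃ u' w', s(u, w) = s(u', w') ∧ u' ∈ S ∧ w' ∈ S ∧ g u' ≤ r1 ∧ r1 < g w' - yv w' :=
      ⟨u, w, rfl, huS, hwS, hgu, hgw⟩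
    have hdmin : dmin g s(u, w) = g u := by
      rw [dmin_mk]
      have := hyv w
      exact min_eq_left (by linarith)
    rw [if_neg (vol_PQ_disj hyv hQ1'), if_pos hQ1', hdmin, zero_add]
    by_cases h2 : r2 < g w - yv w
    · have hQ2 : ∃ u' w', s(u, w) = s(u', w') ∧ u' ∈ S ∧ w' ∈ S ∧ g u' ≤ r2 ∧ r2 < g w' - yv w' :=
        ⟨u, w, rfl, huS, hwS, hgu.trans h12, h2⟩
      rw [if_neg (vol_PQ_disj hyv hQ2), if_pos hQ2, zero_add]
      exact mul_le_mul_of_nonneg_left (by linarith) (hc _)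
    · push_neg at h2
      have hP2 : (∃ v ∈ s(u, w), v ∈ ball g S r2) ∧
          ∀ v ∈ s(u, w), v ∈ ball g S r2 ∪ gy g yv S r2 := by
        have hyu := hyv u
        have hyw := hyv w
        refine ⟨⟨u, Sym2.mem_mk_left u w, mem_ball'.mpr ⟨huS, hgu.trans h12⟩⟩, fun v hv => ?_⟩
        rw [Finset.mem_union]
        rcases Sym2.mem_iff.mp hv with rfl | rfl
        · exact (ballgy (hyv v)).mpr ⟨huS, by linarith⟩
        · exact (ballgy (hyv v)).mpr ⟨hwS, by linarith⟩
      rw [if_pos hP2, if_neg (fun h => vol_PQ_disj hyv h hP2), add_zero]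
      have hadj : G.Adj u w := by
        rw [SimpleGraph.mem_edgeFinset] at he
        exact he
      have htr := htri u w hadj (by linarith)
      have hyw := hyv w
      exact mul_le_mul_of_nonneg_left (by linarith) (hc _)
  · rw [if_neg hQ1, add_zero]
    by_cases hP1 : (∃ v ∈ e, v ∈ ball g S r1) ∧ ∀ v ∈ e, v ∈ ball g S r1 ∪ gy g yv S r1
    · have hP2 := vol_P_mono hyv h12 hP1
      rw [if_pos hP1, if_pos hP2, if_neg (fun h => vol_PQ_disj hyv h hP2), add_zero]
    · rw [if_neg hP1]
      exact vol_contrib_nonneg c x g yv S hc hx e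
  
lemma cvol_anti (c x : Sym2 V → ℝ) (g yv : V → ℝ) (S : Finset V)
    (hc : ∀ e, 0 ≤ c e) (hx : ∀ e, 0 ≤ x e) (hyv : ∀ w, 0 ≤ yv w) (β : ℝ) {b r1 r2 : ℝ}
    (htri : ∀ u w, G.Adj u w → g u ≤ b → g w ≤ g u + x s(u, w) + yv w)
    (h12 : r1 ≤ r2) (h2b : r2 ≤ b) :
    cvol G c x g yv S β r2 ≤ cvol G c x g yv S β r1 := by
  rw [cvol_eq_sum, cvol_eq_sum]
  refine (add_le_add_iff_left β).mpr (Finset.sum_le_sum ?_)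
  intro e he
  by_cases hQ2 : ∃ u w, e = s(u, w) ∧ u ∈ S ∧ w ∈ S ∧ g u ≤ r2 ∧ r2 < g w - yv w
  · obtain ⟨u, w, rfl, huS, hwS, hgu, hgw⟩ := hQ2
    have hQ2' : ∃ u' w', s(u, w) = s(u', w') ∧ u' ∈ S ∧ w' ∈ S ∧ g u' ≤ r2 ∧ r2 < g w' - yv w' :=
      ⟨u, w, rfl, huS, hwS, hgu, hgw⟩
    rw [if_neg (cvol_PQ_disj hyv hQ2'), if_pos hQ2', zero_add]
    by_cases h1 : g u ≤ r1
    · have hQ1 : ∃ u' w', s(u, w) = s(u', w') ∧ u' ∈ S ∧ w' ∈ S ∧ g u' ≤ r1 ∧ r1 < g w' - yv w' :=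
        ⟨u, w, rfl, huS, hwS, h1, by linarith⟩
      rw [if_neg (cvol_PQ_disj hyv hQ1), if_pos hQ1, zero_add]
      exact mul_le_mul_of_nonneg_left (by linarith) (hc _)
    · push_neg at h1
      have hP1 : (∃ v ∈ s(u, w), v ∈ bbar g yv S r1) ∧
          ∀ v ∈ s(u, w), v ∈ bbar g yv S r1 ∪ gy g yv S r1 := by
        have hyw := hyv w
        refine ⟨⟨w, Sym2.mem_mk_right u w, (mem_bbar' (hyv w)).mpr ⟨hwS, by linarith⟩⟩,
          fun v hv => ?_⟩
        rw [Finset.mem_union]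
        rcases Sym2.mem_iff.mp hv with rfl | rfl
        · exact (bbargy (hyv v)).mpr ⟨huS, h1⟩
        · exact (bbargy (hyv v)).mpr ⟨hwS, by linarith⟩
      rw [if_pos hP1, if_neg (fun h => cvol_PQ_disj hyv h hP1), add_zero]
      have hadj : G.Adj u w := by
        rw [SimpleGraph.mem_edgeFinset] at he
        exact he
      have htr := htri u w hadj (by linarith)
      have hdmax : dmax (fun v => g v - yv v) s(u, w) = max (g u - yv u) (g w - yv w) :=
        dmax_mk _ u w
      rw [hdmax]
      have hyu := hyv u
      have hmax : max (g u - yv u) (g w - yv w) - r2 ≤ x s(u, w) := by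
        have h1' : g u - yv u - r2 ≤ x s(u, w) := by
          have := hx s(u, w); linarith
        have h2' : g w - yv w - r2 ≤ x s(u, w) := by linarith
        rcases max_cases (g u - yv u) (g w - yv w) with ⟨hm, -⟩ | ⟨hm, -⟩ <;> rw [hm] <;> linarith
      exact mul_le_mul_of_nonneg_left hmax (hc _)
  · rw [if_neg hQ2, add_zero]
    by_cases hP2 : (∃ v ∈ e, v ∈ bbar g yv S r2) ∧ ∀ v ∈ e, v ∈ bbar g yv S r2 ∪ gy g yv S r2
    · have hP1 := cvol_P_anti hyv h12 hP2
      rw [if_pos hP2, if_pos hP1, if_neg (fun h => cvol_PQ_disj hyv h hP1), add_zero]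
    · rw [if_neg hP2]
      exact cvol_contrib_nonneg c x g yv S hc hx e


omit [Fintype V] [DecidableEq V] in
lemma const_piece {s t α r r0 : ℝ} (hα : ∀ ρ, s < ρ → ρ < t → α ≠ ρ)
    (hr1 : s < r) (hr2 : r < t) (hr01 : s < r0) (hr02 : r0 < t) : α ≤ r ↔ α ≤ r0 := by
  constructor <;> intro h <;> by_contra hcon <;> push_neg at hcon
  · exact hα α (hr01.trans hcon) (h.trans_lt hr2) rfl
  · exact hα α (hr1.trans hcon) (h.trans_lt hr02) rfl

omit [Fintype V] [DecidableEq V] in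
lemma const_piece_lt {s t α r r0 : ℝ} (hα : ∀ ρ, s < ρ → ρ < t → α ≠ ρ)
    (hr1 : s < r) (hr2 : r < t) (hr01 : s < r0) (hr02 : r0 < t) : r < α ↔ r0 < α := by
  rw [← not_le, ← not_le, const_piece hα hr1 hr2 hr01 hr02]

omit [Fintype V] [DecidableEq V] in
lemma ball_piece {g : V → ℝ} {S : Finset V} {s t r r0 : ℝ}
    (hTg : ∀ v ∈ S, ∀ ρ, s < ρ → ρ < t → g v ≠ ρ)
    (hr1 : s < r) (hr2 : r < t) (hr01 : s < r0) (hr02 : r0 < t) :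
    ball g S r = ball g S r0 :=
  Finset.filter_congr fun v hv => const_piece (hTg v hv) hr1 hr2 hr01 hr02

omit [Fintype V] [DecidableEq V] in
lemma gy_piece {g yv : V → ℝ} {S : Finset V} {s t r r0 : ℝ}
    (hTg : ∀ v ∈ S, ∀ ρ, s < ρ → ρ < t → g v ≠ ρ)
    (hTgy : ∀ v ∈ S, ∀ ρ, s < ρ → ρ < t → g v - yv v ≠ ρ)
    (hr1 : s < r) (hr2 : r < t) (hr01 : s < r0) (hr02 : r0 < t) :
    gy g yv S r = gy g yv S r0 := by
  refine Finset.filter_congr fun v hv => ?_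
  rw [const_piece_lt (hTg v hv) hr1 hr2 hr01 hr02]
  have h2 : g v ≤ r + yv v ↔ g v ≤ r0 + yv v := by
    rw [← sub_le_iff_le_add, ← sub_le_iff_le_add]
    exact const_piece (hTgy v hv) hr1 hr2 hr01 hr02
  rw [h2]

lemma bdx_piece {g yv : V → ℝ} {S : Finset V} {s t r r0 : ℝ}
    (hTg : ∀ v ∈ S, ∀ ρ, s < ρ → ρ < t → g v ≠ ρ)
    (hTgy : ∀ v ∈ S, ∀ ρ, s < ρ → ρ < t → g v - yv v ≠ ρ)
    (hr1 : s < r) (hr2 : r < t) (hr01 : s < r0) (hr02 : r0 < t) :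
    bdx G g yv S r = bdx G g yv S r0 := by
  refine Finset.filter_congr fun e he => ?_
  constructor <;> rintro ⟨u, w, rfl, huS, hwS, h1, h2⟩
  · exact ⟨u, w, rfl, huS, hwS, (const_piece (hTg u huS) hr1 hr2 hr01 hr02).mp h1,
      (const_piece_lt (hTgy w hwS) hr1 hr2 hr01 hr02).mp h2⟩
  · exact ⟨u, w, rfl, huS, hwS, (const_piece (hTg u huS) hr1 hr2 hr01 hr02).mpr h1,
      (const_piece_lt (hTgy w hwS) hr1 hr2 hr01 hr02).mpr h2⟩

omit [Fintype V] [DecidableEq V] in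
lemma bbar_piece {g yv : V → ℝ} {S : Finset V} {s t r r0 : ℝ}
    (hTg : ∀ v ∈ S, ∀ ρ, s < ρ → ρ < t → g v ≠ ρ)
    (hTgy : ∀ v ∈ S, ∀ ρ, s < ρ → ρ < t → g v - yv v ≠ ρ)
    (hr1 : s < r) (hr2 : r < t) (hr01 : s < r0) (hr02 : r0 < t) :
    bbar g yv S r = bbar g yv S r0 := by
  rw [bbar, bbar, ball_piece hTg hr1 hr2 hr01 hr02, gy_piece hTg hTgy hr1 hr2 hr01 hr02]

lemma vol_affine (c x : Sym2 V → ℝ) (g yv : V → ℝ) (S : Finset V)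
    (hc : ∀ e, 0 ≤ c e) (β : ℝ) {s t : ℝ} (hst : s < t)
    (hTg : ∀ v ∈ S, ∀ ρ, s < ρ → ρ < t → g v ≠ ρ)
    (hTgy : ∀ v ∈ S, ∀ ρ, s < ρ → ρ < t → g v - yv v ≠ ρ) :
    ∃ A B : ℝ, 0 ≤ B ∧ ∀ r, s < r → r < t →
      vol G c x g yv S β r = A + B * r ∧ (∑ e ∈ bdx G g yv S r, c e) = B := by
  set r0 := (s + t) / 2 with hr0def
  have hr01 : s < r0 := by rw [hr0def]; linarith
  have hr02 : r0 < t := by rw [hr0def]; linarith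
  refine ⟨β + (∑ e ∈ G.edgeFinset.filter (fun e =>
        (∃ w ∈ e, w ∈ ball g S r0) ∧ ∀ w ∈ e, w ∈ ball g S r0 ∪ gy g yv S r0), c e * x e)
      - ∑ e ∈ bdx G g yv S r0, c e * dmin g e,
    ∑ e ∈ bdx G g yv S r0, c e, Finset.sum_nonneg fun e _ => hc e, ?_⟩
  intro r hr1 hr2
  have hball := ball_piece (S := S) hTg hr1 hr2 hr01 hr02
  have hgy := gy_piece (S := S) hTg hTgy hr1 hr2 hr01 hr02
  have hbdx := bdx_piece (G := G) (S := S) hTg hTgy hr1 hr2 hr01 hr02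
  constructor
  · rw [vol, hball, hgy, hbdx]
    simp only [mul_sub]
    rw [Finset.sum_sub_distrib, ← Finset.sum_mul]
    ring
  · rw [hbdx]

lemma cvol_affine (c x : Sym2 V → ℝ) (g yv : V → ℝ) (S : Finset V)
    (hc : ∀ e, 0 ≤ c e) (β : ℝ) {s t : ℝ} (hst : s < t)
    (hTg : ∀ v ∈ S, ∀ ρ, s < ρ → ρ < t → g v ≠ ρ)
    (hTgy : ∀ v ∈ S, ∀ ρ, s < ρ → ρ < t → g v - yv v ≠ ρ) :
    ∃ A B : ℝ, 0 ≤ B ∧ ∀ r, s < r → r < t →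
      cvol G c x g yv S β r = A - B * r ∧ (∑ e ∈ bdx G g yv S r, c e) = B := by
  set r0 := (s + t) / 2 with hr0def
  have hr01 : s < r0 := by rw [hr0def]; linarith
  have hr02 : r0 < t := by rw [hr0def]; linarith
  refine ⟨β + (∑ e ∈ G.edgeFinset.filter (fun e =>
        (∃ w ∈ e, w ∈ bbar g yv S r0) ∧ ∀ w ∈ e, w ∈ bbar g yv S r0 ∪ gy g yv S r0), c e * x e)
      + ∑ e ∈ bdx G g yv S r0, c e * dmax (fun v => g v - yv v) e,
    ∑ e ∈ bdx G g yv S r0, c e, Finset.sum_nonneg fun e _ => hc e, ?_⟩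
  intro r hr1 hr2
  have hbbar := bbar_piece (S := S) hTg hTgy hr1 hr2 hr01 hr02
  have hgy := gy_piece (S := S) hTg hTgy hr1 hr2 hr01 hr02
  have hbdx := bdx_piece (G := G) (S := S) hTg hTgy hr1 hr2 hr01 hr02
  constructor
  · rw [cvol, hbbar, hgy, hbdx]
    simp only [mul_sub]
    rw [Finset.sum_sub_distrib, ← Finset.sum_mul]
    ring
  · rw [hbdx]

omit [Fintype V] in
lemma triangle_ineq {G : SimpleGraph V} (x : Sym2 V → ℝ) (yv : V → ℝ)
    (hx : ∀ e, 0 ≤ x e) (hyv : ∀ w, 0 ≤ yv w) (z : V) (ℓ : V → V → ℝ)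
    (hle : ∀ u v, ∀ p : G.Walk u v, p.IsPath →
      ℓ u v ≤ (p.edges.map x).sum + (p.support.tail.map yv).sum)
    (hattain : ∀ u v, G.Reachable u v → ∃ p : G.Walk u v, p.IsPath ∧
      ℓ u v = (p.edges.map x).sum + (p.support.tail.map yv).sum)
    {u w : V} (hadj : G.Adj u w) (hreach : G.Reachable z u) :
    ℓ z w ≤ ℓ z u + x s(u, w) + yv w := by
  obtain ⟨p, hp, hval⟩ := hattain z u hreach
  have hxuw := hx s(u, w)
  have hyw := hyv w
  by_cases hw : w ∈ p.support
  · have hq := hp.takeUntil hw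
    have h1 := hle z w (p.takeUntil w hw) hq
    have hE : (p.takeUntil w hw).edges ++ (p.dropUntil w hw).edges = p.edges := by
      rw [← SimpleGraph.Walk.edges_append, p.take_spec hw]
    have hS : (p.takeUntil w hw).support ++ (p.dropUntil w hw).support.tail = p.support := by
      rw [← SimpleGraph.Walk.support_append, p.take_spec hw]
    have hS2 : p.support.tail
        = (p.takeUntil w hw).support.tail ++ (p.dropUntil w hw).support.tail := by
      rw [← hS, SimpleGraph.Walk.support_eq_cons (p.takeUntil w hw)]
      rfl
    have hsum1 : ((p.takeUntil w hw).edges.map x).sum ≤ (p.edges.map x).sum := by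
      rw [← hE, List.map_append, List.sum_append]
      have h0 : 0 ≤ ((p.dropUntil w hw).edges.map x).sum := by
        apply List.sum_nonneg
        intro a ha
        obtain ⟨e, -, rfl⟩ := List.mem_map.mp ha
        exact hx e
      linarith
    have hsum2 : ((p.takeUntil w hw).support.tail.map yv).sum ≤ (p.support.tail.map yv).sum := by
      rw [hS2, List.map_append, List.sum_append]
      have h0 : 0 ≤ ((p.dropUntil w hw).support.tail.map yv).sum := by
        apply List.sum_nonneg
        intro a ha
        obtain ⟨v, -, rfl⟩ := List.mem_map.mp ha
        exact hyv v
      linarith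
    linarith
  · have hq : (p.concat hadj).IsPath := by
      rw [← SimpleGraph.Walk.isPath_reverse_iff, SimpleGraph.Walk.reverse_concat]
      refine SimpleGraph.Walk.IsPath.cons hp.reverse ?_
      rw [SimpleGraph.Walk.support_reverse]
      simpa using hw
    have h1 := hle z w (p.concat hadj) hq
    rw [SimpleGraph.Walk.edges_concat, SimpleGraph.Walk.support_concat] at h1
    simp only [List.concat_eq_append] at h1
    rw [SimpleGraph.Walk.support_eq_cons p] at h1
    simp only [List.cons_append, List.tail_cons, List.map_append, List.sum_append,
      List.map_cons, List.map_nil, List.sum_cons, List.sum_nil] at h1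
    linarith

end Comb

/-- Region-growing lemma with edge and node lengths: with `ℓ(u;v)`
the min over `u`–`v` paths of the total edge length plus the node lengths of all path
vertices but `u` (encoded by `hle`/`hattain`, and taking a large value on unreachable
pairs), both integral bounds hold for all `0 ≤ a < b`. -/
theorem stmt_13 [Fintype V] [DecidableEq V] (G : SimpleGraph V) [DecidableRel G.Adj]
    (c x : Sym2 V → ℝ) (yv : V → ℝ)
    (hc : ∀ e, 0 ≤ c e) (hx : ∀ e, 0 ≤ x e) (hyv : ∀ w, 0 ≤ yv w)
    (S : Finset V) (z : V) (β : ℝ) (hβ : 0 < β)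
    (a b : ℝ) (ha : 0 ≤ a) (hab : a < b)
    (ℓ : V → V → ℝ)
    (hle : ∀ u v, ∀ p : G.Walk u v, p.IsPath →
      ℓ u v ≤ (p.edges.map x).sum + (p.support.tail.map yv).sum)
    (hattain : ∀ u v, G.Reachable u v → ∃ p : G.Walk u v, p.IsPath ∧
      ℓ u v = (p.edges.map x).sum + (p.support.tail.map yv).sum)
    (hfar : ∀ u v, ¬ G.Reachable u v → b + yv v < ℓ u v) :
    ((∫ ρ in a..b, (∑ e ∈ bdx G (ℓ z) yv S ρ, c e) /
        (vol G c x (ℓ z) yv S β ρ *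
          Real.log (Real.exp 1 * vol G c x (ℓ z) yv S β b / vol G c x (ℓ z) yv S β ρ))) ≤
      Real.log (Real.log
        (Real.exp 1 * vol G c x (ℓ z) yv S β b / vol G c x (ℓ z) yv S β a))) ∧
    ((∫ ρ in a..b, (∑ e ∈ bdx G (ℓ z) yv S ρ, c e) /
        (cvol G c x (ℓ z) yv S β ρ *
          Real.log (Real.exp 1 * cvol G c x (ℓ z) yv S β a / cvol G c x (ℓ z) yv S β ρ))) ≤
      Real.log (Real.log
        (Real.exp 1 * cvol G c x (ℓ z) yv S β a / cvol G c x (ℓ z) yv S β b))) := by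
  have hreach : ∀ u, ℓ z u ≤ b → G.Reachable z u := by
    intro u hu
    by_contra hr
    have h1 := hfar z u hr
    have h2 := hyv u
    linarith
  have htri : ∀ u w, G.Adj u w → ℓ z u ≤ b → ℓ z w ≤ ℓ z u + x s(u, w) + yv w :=
    fun u w hadj hub => triangle_ineq x yv hx hyv z ℓ hle hattain hadj (hreach u hub)
  set T : Finset ℝ := S.image (ℓ z) ∪ S.image (fun v => ℓ z v - yv v) with hTdef
  have hTmem : ∀ {s t : ℝ}, (∀ r, s < r → r < t → r ∉ T) →
      (∀ v ∈ S, ∀ ρ, s < ρ → ρ < t → ℓ z v ≠ ρ) ∧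
      (∀ v ∈ S, ∀ ρ, s < ρ → ρ < t → ℓ z v - yv v ≠ ρ) := by
    intro s t havoid
    constructor
    · intro v hv ρ h1 h2 heq
      exact havoid ρ h1 h2 (Finset.mem_union_left _ (Finset.mem_image.mpr ⟨v, hv, heq⟩))
    · intro v hv ρ h1 h2 heq
      exact havoid ρ h1 h2 (Finset.mem_union_right _ (Finset.mem_image.mpr ⟨v, hv, heq⟩))
  constructor
  · -- first bound (vol)
    set K := vol G c x (ℓ z) yv S β b with hKdef
    have hK0 : 0 < K := hβ.trans_le (beta_le_vol c x (ℓ z) yv S hc hx β b)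
    obtain ⟨hint1, hle1⟩ := core β K hβ
      (fun ρ => ∑ e ∈ bdx G (ℓ z) yv S ρ, c e)
      (fun ρ => vol G c x (ℓ z) yv S β ρ) T a b hab
      (fun ρ h1 h2 => ⟨beta_le_vol c x (ℓ z) yv S hc hx β ρ,
        vol_mono c x (ℓ z) yv S hc hx hyv β htri h2 le_rfl⟩)
      (fun r1 r2 h1 h12 h2b => vol_mono c x (ℓ z) yv S hc hx hyv β htri h12 h2b)
      (by
        intro s t has hst htb havoid
        obtain ⟨hTg, hTgy⟩ := hTmem havoid
        obtain ⟨A, B, hB, hform⟩ := vol_affine (G := G) c x (ℓ z) yv S hc β hst hTg hTgy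
        exact ⟨A, B, hB, fun r h1 h2 => hform r h1 h2⟩)
    have hPhib : Phi K K = 0 := by
      rw [Phi, mul_div_assoc, div_self hK0.ne', mul_one, Real.log_exp, Real.log_one, neg_zero]
    calc (∫ ρ in a..b, (∑ e ∈ bdx G (ℓ z) yv S ρ, c e) /
          (vol G c x (ℓ z) yv S β ρ *
            Real.log (Real.exp 1 * K / vol G c x (ℓ z) yv S β ρ)))
        ≤ Phi K (vol G c x (ℓ z) yv S β b) - Phi K (vol G c x (ℓ z) yv S β a) := hle1
      _ = Real.log (Real.log (Real.exp 1 * K / vol G c x (ℓ z) yv S β a)) := by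
          rw [← hKdef, hPhib, Phi]; ring
  · -- second bound (cvol)
    set K := cvol G c x (ℓ z) yv S β a with hKdef
    have hK0 : 0 < K := hβ.trans_le (beta_le_cvol c x (ℓ z) yv S hc hx β a)
    obtain ⟨hint2, hle2⟩ := core β K hβ
      (fun σ => ∑ e ∈ bdx G (ℓ z) yv S (a + b - σ), c e)
      (fun σ => cvol G c x (ℓ z) yv S β (a + b - σ)) (T.image (fun r => a + b - r)) a b hab
      (fun σ h1 h2 => ⟨beta_le_cvol c x (ℓ z) yv S hc hx β _,
        cvol_anti c x (ℓ z) yv S hc hx hyv β htri (show a ≤ a + b - σ by linarith)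
          (show a + b - σ ≤ b by linarith)⟩)
      (fun σ1 σ2 h1 h12 h2b =>
        cvol_anti c x (ℓ z) yv S hc hx hyv β htri (show a + b - σ2 ≤ a + b - σ1 by linarith)
          (show a + b - σ1 ≤ b by linarith))
      (by
        intro s t has hst htb havoid
        have havoid' : ∀ r, a + b - t < r → r < a + b - s → r ∉ T := by
          intro r h1 h2 hrT
          refine havoid (a + b - r) (by linarith) (by linarith) ?_
          exact Finset.mem_image.mpr ⟨r, hrT, rfl⟩
        obtain ⟨hTg, hTgy⟩ := hTmem havoid'
        obtain ⟨A, B, hB, hform⟩ := cvol_affine (G := G) c x (ℓ z) yv S hc β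
          (show a + b - t < a + b - s by linarith) hTg hTgy
        refine ⟨A - B * (a + b), B, hB, fun σ h1 h2 => ?_⟩
        have h := hform (a + b - σ) (by linarith) (by linarith)
        refine ⟨?_, h.2⟩
        show cvol G c x (ℓ z) yv S β (a + b - σ) = A - B * (a + b) + B * σ
        rw [h.1]; ring)
    have hPhib : Phi K K = 0 := by
      rw [Phi, mul_div_assoc, div_self hK0.ne', mul_one, Real.log_exp, Real.log_one, neg_zero]
    have e1 : a + b - b = a := by ring
    have e2 : a + b - a = b := by ring
    have hflip := intervalIntegral.integral_comp_sub_left (a := a) (b := b)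
      (fun ρ => (∑ e ∈ bdx G (ℓ z) yv S ρ, c e) /
        (cvol G c x (ℓ z) yv S β ρ *
          Real.log (Real.exp 1 * K / cvol G c x (ℓ z) yv S β ρ))) (a + b)
    rw [e1, e2] at hflip
    calc (∫ ρ in a..b, (∑ e ∈ bdx G (ℓ z) yv S ρ, c e) /
          (cvol G c x (ℓ z) yv S β ρ *
            Real.log (Real.exp 1 * K / cvol G c x (ℓ z) yv S β ρ)))
        = ∫ σ in a..b, (∑ e ∈ bdx G (ℓ z) yv S (a + b - σ), c e) /
          (cvol G c x (ℓ z) yv S β (a + b - σ) *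
            Real.log (Real.exp 1 * K / cvol G c x (ℓ z) yv S β (a + b - σ))) := hflip.symm
      _ ≤ Phi K (cvol G c x (ℓ z) yv S β (a + b - b))
            - Phi K (cvol G c x (ℓ z) yv S β (a + b - a)) := hle2
      _ = Real.log (Real.log (Real.exp 1 * K / cvol G c x (ℓ z) yv S β b)) := by
          rw [e1, e2, ← hKdef, hPhib, Phi]; ring

end MixedRegionGrow
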